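/- Suppose $p(x) = \prod_{i=1}^n (x - \alpha_i)$ and $q(x) = \prod_{j=1}^m (x - \beta_j)$ are monic real polynomials with all roots of absolute value less than $a > 0$, and suppose for every $k \geq 1$ that $\frac{1}{n}\sum_{i=1}^n \alpha_i^k \geq \frac{1}{m}\sum_{j=1}^m \beta_j^k$. Then $\frac{1}{n}\log p(a) \leq \frac{1}{m}\log q(a)$. -/

import Mathlib

theorem log_prod_compare (n m : ℕ) (hn : 0 < n) (hm : 0 < m)
    (α : Fin n → ℝ) (β : Fin m → ℝ) (a : ℝ) (ha : 0 < a)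
    (hα : ∀ i, |α i| < a) (hβ : ∀ j, |β j| < a)
    (hpow : ∀ k : ℕ, 1 ≤ k → (∑ i, α i ^ k) / n ≥ (∑ j, β j ^ k) / m) :
    Real.log (∏ i, (a - α i)) / n ≤ Real.log (∏ j, (a - β j)) / m := by
  have hn' : (0:ℝ) < n := Nat.cast_pos.mpr hn
  have hm' : (0:ℝ) < m := Nat.cast_pos.mpr hm
  have hαa : ∀ i, |α i / a| < 1 := fun i => by
    rw [abs_div, abs_of_pos ha, div_lt_one ha]; exact hα i
  have hβa : ∀ j, |β j / a| < 1 := fun j => by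
    rw [abs_div, abs_of_pos ha, div_lt_one ha]; exact hβ j
  have hsα : HasSum (fun k : ℕ => (∑ i, (α i / a) ^ (k+1) / (k+1)) / n)
      ((-∑ i, Real.log (1 - α i / a)) / n) := by
    refine HasSum.div_const ?_ _
    rw [← Finset.sum_neg_distrib]
    exact hasSum_sum (fun i _ => Real.hasSum_pow_div_log_of_abs_lt_one (hαa i))
  have hsβ : HasSum (fun k : ℕ => (∑ j, (β j / a) ^ (k+1) / (k+1)) / m)
      ((-∑ j, Real.log (1 - β j / a)) / m) := by
    refine HasSum.div_const ?_ _
    rw [← Finset.sum_neg_distrib]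
    exact hasSum_sum (fun j _ => Real.hasSum_pow_div_log_of_abs_lt_one (hβa j))
  have hterm : ∀ k : ℕ, (∑ j, (β j / a) ^ (k+1) / (k+1)) / m
      ≤ (∑ i, (α i / a) ^ (k+1) / (k+1)) / n := by
    intro k
    have h := hpow (k+1) (Nat.le_add_left 1 k)
    have key : ∀ (N : ℕ) (γ : Fin N → ℝ),
        (∑ i, (γ i / a) ^ (k+1) / (k+1)) = (∑ i, γ i ^ (k+1)) / (a ^ (k+1) * (k+1)) := by
      intro N γ
      rw [Finset.sum_div]
      refine Finset.sum_congr rfl fun i _ => ?_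
      rw [div_pow]
      have h1 : (a:ℝ) ^ (k+1) ≠ 0 := by positivity
      have h2 : ((k:ℝ)+1) ≠ 0 := by positivity
      field_simp
    rw [key, key, div_right_comm, div_right_comm (∑ i, α i ^ (k+1))]
    gcongr
  have hle := hasSum_le hterm hsβ hsα
  have hle2 : (∑ i, Real.log (1 - α i / a)) / n ≤ (∑ j, Real.log (1 - β j / a)) / m := by
    rw [neg_div, neg_div, neg_le_neg_iff] at hle
    exact hle
  have hpos : ∀ {N : ℕ} (γ : Fin N → ℝ), (∀ i, |γ i| < a) → ∀ i, 0 < a - γ i := by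
    intro N γ h i
    have := abs_lt.mp (h i)
    linarith [this.1, this.2]
  have hlog : ∀ {N : ℕ} (γ : Fin N → ℝ), (∀ i, |γ i| < a) →
      Real.log (∏ i, (a - γ i)) = N * Real.log a + ∑ i, Real.log (1 - γ i / a) := by
    intro N γ h
    rw [Real.log_prod (fun i _ => (hpos γ h i).ne')]
    have step : ∀ i : Fin N, Real.log (a - γ i)
        = Real.log a + Real.log (1 - γ i / a) := by
      intro i
      have h2 : 0 < 1 - γ i / a := by
        rw [sub_pos, div_lt_one ha]; linarith [(abs_lt.mp (h i)).2]
      rw [← Real.log_mul ha.ne' h2.ne']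
      congr 1
      field_simp
    rw [Finset.sum_congr rfl fun i _ => step i, Finset.sum_add_distrib,
      Finset.sum_const, Finset.card_univ, Fintype.card_fin, nsmul_eq_mul]
  rw [hlog α hα, hlog β hβ, add_div, add_div,
    mul_div_cancel_left₀ _ hn'.ne', mul_div_cancel_left₀ _ hm'.ne']
  linarith
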